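/- Let N = (N_h : h ≥ 0) be a sequence of level numbers with N_0 = 1, finite total sum, and height H(N) = min{h ≥ 1 : N_h = 0}, with N_h = 0 for h ≥ H(N) and N_h > 0 for h < H(N). Then the number of positive excursions x with N(x) = N equals Π_{h=1}^{H(N)-2} C(N_{h+1} + N_h - 1, N_h - 1). -/

import Mathlib

/-- `x` restricted to `[0,θ]` is a positive excursion: starts and ends at `0`,
is strictly positive in the interior, and has jumps `±1`. -/
def IsPosExc (x : ℕ → ℤ) (θ : ℕ) : Prop :=
  x 0 = 0 ∧ x θ = 0 ∧ (∀ n, 0 < n → n < θ → 0 < x n) ∧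
    (∀ n, n < θ → x (n + 1) - x n = 1 ∨ x (n + 1) - x n = -1)

/-- `x` restricted to `[0,θ]` is a negative excursion. -/
def IsNegExc (x : ℕ → ℤ) (θ : ℕ) : Prop :=
  x 0 = 0 ∧ x θ = 0 ∧ (∀ n, 0 < n → n < θ → x n < 0) ∧
    (∀ n, n < θ → x (n + 1) - x n = 1 ∨ x (n + 1) - x n = -1)

/-- Number of individuals of the excursion `x` (of length `θ`) born at level `h`,
i.e. number of up-steps from `h` to `h+1`. -/
def levelCount (x : ℕ → ℤ) (θ : ℕ) (h : ℤ) : ℕ :=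
  ((Finset.range θ).filter (fun n => x n = h ∧ x (n + 1) = x n + 1)).card

/-- For negative excursions: number of individuals born at level `h`,
i.e. number of down-steps from `h` to `h-1`. -/
def levelCountDown (x : ℕ → ℤ) (θ : ℕ) (h : ℤ) : ℕ :=
  ((Finset.range θ).filter (fun n => x n = h ∧ x (n + 1) = x n - 1)).card

/-- `(b,t)` is (the birth/death time pair of) an individual of the excursion `x`:
born at time `b` at level `x b`, with an up-step at `b`, dying at the first
return time `t` to its birth level. -/
def IsIndividual (x : ℕ → ℤ) (θ b t : ℕ) : Prop :=
  b < t ∧ t ≤ θ ∧ x (b + 1) = x b + 1 ∧ x t = x b ∧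
    ∀ n, b < n → n < t → x n ≠ x b


namespace ExcAux

def stp (b : Bool) : ℤ := if b then 1 else -1

def ht (l : List Bool) : ℤ := (l.count true : ℤ) - (l.count false : ℤ)

def paF (l : List Bool) (n : ℕ) : ℤ := ht (l.take n)

def lcW (l : List Bool) (h : ℤ) : ℕ :=
  ((Finset.range l.length).filter (fun n => paF l n = h ∧ paF l (n + 1) = paF l n + 1)).card

def Bridge (l : List Bool) : Prop := ht l = 0 ∧ ∀ n, 0 ≤ paF l n

@[simp] lemma ht_nil : ht ([] : List Bool) = 0 := by simp [ht]

lemma ht_cons (b : Bool) (l : List Bool) : ht (b :: l) = stp b + ht l := by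
  cases b <;> simp [ht, stp, List.count_cons] <;> push_cast <;> ring

lemma ht_append (l₁ l₂ : List Bool) : ht (l₁ ++ l₂) = ht l₁ + ht l₂ := by
  simp [ht, List.count_append]; push_cast; ring

lemma ht_singleton (b : Bool) : ht [b] = stp b := by
  rw [show [b] = b :: [] from rfl, ht_cons, ht_nil, add_zero]

@[simp] lemma paF_zero (l : List Bool) : paF l 0 = 0 := by simp [paF]

@[simp] lemma paF_nil (n : ℕ) : paF ([] : List Bool) n = 0 := by simp [paF]

lemma paF_cons_succ (b : Bool) (l : List Bool) (n : ℕ) :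
    paF (b :: l) (n + 1) = stp b + paF l n := by
  simp only [paF, List.take_succ_cons, ht_cons]

lemma paF_of_le (l : List Bool) {n : ℕ} (h : l.length ≤ n) : paF l n = ht l := by
  simp [paF, List.take_of_length_le h]

lemma paF_length (l : List Bool) : paF l l.length = ht l := paF_of_le l le_rfl

lemma paF_append_left (l₁ l₂ : List Bool) {n : ℕ} (h : n ≤ l₁.length) :
    paF (l₁ ++ l₂) n = paF l₁ n := by
  simp [paF, List.take_append, Nat.sub_eq_zero_of_le h]

lemma paF_append_right (l₁ l₂ : List Bool) (n : ℕ) :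
    paF (l₁ ++ l₂) (l₁.length + n) = ht l₁ + paF l₂ n := by
  simp [paF, List.take_append, ht_append, List.take_of_length_le (Nat.le_add_right l₁.length n)]

lemma paF_drop (l : List Bool) (m n : ℕ) :
    paF (l.drop m) n = paF l (m + n) - paF l m := by
  have : l.take (m + n) = l.take m ++ (l.drop m).take n := by
    rw [← List.take_add]  -- maybe name differs
  simp [paF, this, ht_append]

lemma paF_take (l : List Bool) (m n : ℕ) : paF (l.take m) n = paF l (min n m) := by
  simp [paF, List.take_take]

lemma paF_succ (l : List Bool) {n : ℕ} (hn : n < l.length) :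
    paF l (n + 1) = paF l n + stp (l.get ⟨n, hn⟩) := by
  rw [paF, List.take_succ, List.getElem?_eq_getElem hn]
  simp only [Option.toList_some]
  rw [ht_append, ht_singleton, paF]
  rw [List.get_eq_getElem, add_comm]


lemma stp_true : stp true = 1 := rfl
lemma stp_false : stp false = -1 := rfl

@[simp] lemma lcW_nil (h : ℤ) : lcW [] h = 0 := by simp [lcW]

lemma lcW_cons (b : Bool) (l : List Bool) (h : ℤ) :
    lcW (b :: l) h = (if b = true ∧ h = 0 then 1 else 0) + lcW l (h - stp b) := by
  rw [lcW, Finset.card_filter, List.length_cons, Finset.sum_range_succ', add_comm]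
  have h0 : paF (b :: l) 0 = 0 := paF_zero _
  have hsucc : ∀ n, paF (b :: l) (n + 1) = stp b + paF l n := paF_cons_succ b l
  rw [lcW, Finset.card_filter]
  congr 1
  · rw [h0, hsucc 0, paF_zero]
    cases b
    · simp [stp_false]
    · simp [stp_true, eq_comm]
  · apply Finset.sum_congr rfl
    intro i _
    congr 1
    rw [hsucc i, hsucc (i + 1)]
    rw [eq_iff_iff]
    constructor
    · rintro ⟨h1, h2⟩; exact ⟨by omega, by omega⟩
    · rintro ⟨h1, h2⟩; exact ⟨by omega, by omega⟩

lemma lcW_append (l₁ l₂ : List Bool) (h : ℤ) :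
    lcW (l₁ ++ l₂) h = lcW l₁ h + lcW l₂ (h - ht l₁) := by
  induction l₁ generalizing h with
  | nil => simp [ht_nil]
  | cons b t ih =>
    rw [List.cons_append, lcW_cons, lcW_cons b t, ih, ht_cons, add_assoc, sub_sub]

lemma lcW_ge (l : List Bool) {c : ℤ} (hc : ∀ n, c ≤ paF l n) {h : ℤ} (hh : h < c) :
    lcW l h = 0 := by
  induction l generalizing c h with
  | nil => simp
  | cons b t ih =>
    have hc0 : c ≤ 0 := by simpa using hc 0
    have hct : ∀ n, c - stp b ≤ paF t n := by
      intro n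
      have := hc (n + 1)
      rw [paF_cons_succ] at this
      omega
    rw [lcW_cons, ih hct (by omega)]
    have : ¬ (b = true ∧ h = 0) := by
      rintro ⟨-, rfl⟩; omega
    simp [this]

lemma lcW_singleton_false (h : ℤ) : lcW [false] h = 0 := by
  rw [show [false] = false :: ([] : List Bool) from rfl, lcW_cons]
  simp


lemma paF_succ' (l : List Bool) {n : ℕ} (hn : n < l.length) :
    paF l (n + 1) = paF l n + stp (l[n]'hn) := paF_succ l hn

lemma bridge_nil : Bridge [] := ⟨ht_nil, fun n => by simp⟩

lemma bridge_append {l₁ l₂ : List Bool} (h₁ : Bridge l₁) (h₂ : Bridge l₂) :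
    Bridge (l₁ ++ l₂) := by
  constructor
  · rw [ht_append, h₁.1, h₂.1, add_zero]
  · intro n
    rcases le_or_gt n l₁.length with h | h
    · rw [paF_append_left _ _ h]; exact h₁.2 n
    · have hn : n = l₁.length + (n - l₁.length) := by omega
      rw [hn, paF_append_right, h₁.1, zero_add]; exact h₂.2 _

lemma bridge_head {l : List Bool} (hb : Bridge l) (hne : l ≠ []) :
    ∃ t, l = true :: t := by
  cases l with
  | nil => exact absurd rfl hne
  | cons b t =>
    cases b with
    | false =>
      exfalso
      have := hb.2 1
      rw [paF_cons_succ, paF_zero, stp_false] at this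
      omega
    | true => exact ⟨t, rfl⟩

lemma lcW_zero_pos {l : List Bool} (hb : Bridge l) (hne : l ≠ []) : 1 ≤ lcW l 0 := by
  obtain ⟨t, rfl⟩ := bridge_head hb hne
  rw [lcW_cons]
  simp

lemma lcW_neg_of_bridge {l : List Bool} (hb : Bridge l) {h : ℤ} (hh : h < 0) : lcW l h = 0 :=
  lcW_ge l hb.2 hh

lemma lcW_wrap (m : List Bool) (h : ℤ) :
    lcW (true :: m ++ [false]) h = (if h = 0 then 1 else 0) + lcW m (h - 1) := by
  rw [show (true :: m ++ [false] : List Bool) = true :: (m ++ [false]) from rfl,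
    lcW_cons, lcW_append, lcW_singleton_false, add_zero, stp_true]
  congr 1
  simp

lemma lcW_wrap_zero {m : List Bool} (hm : Bridge m) : lcW (true :: m ++ [false]) 0 = 1 := by
  rw [lcW_wrap, lcW_neg_of_bridge hm (by norm_num)]
  simp

lemma bridge_wrap {m : List Bool} (hm : Bridge m) : Bridge (true :: m ++ [false]) := by
  constructor
  · rw [show (true :: m ++ [false] : List Bool) = true :: (m ++ [false]) from rfl,
      ht_cons, ht_append, hm.1, ht_singleton, stp_true, stp_false]
    ring
  · intro n
    cases n with
    | zero => simp
    | succ k =>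
      rw [show (true :: m ++ [false] : List Bool) = true :: (m ++ [false]) from rfl,
        paF_cons_succ, stp_true]
      rcases le_or_gt k m.length with hk | hk
      · rw [paF_append_left _ _ hk]
        have := hm.2 k
        omega
      · have hlen : (m ++ [false]).length ≤ k := by simp; omega
        rw [paF_of_le _ hlen, ht_append, hm.1, ht_singleton, stp_false]
        norm_num

noncomputable def ret (r : List Bool) : ℕ :=
  letI := Classical.dec (∃ n, 0 < n ∧ n ≤ r.length ∧ paF r n = 0)
  if h : ∃ n, 0 < n ∧ n ≤ r.length ∧ paF r n = 0 then Nat.find h else r.length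

lemma ret_pos {r : List Bool} (hne : r ≠ []) : 0 < ret r := by
  rw [ret]
  split
  · next h => exact (Nat.find_spec h).1
  · exact List.length_pos_iff.mpr hne

noncomputable def dec (r : List Bool) : List (List Bool) :=
  if hr : r = [] then []
  else ((r.take (ret r)).drop 1).dropLast :: dec (r.drop (ret r))
termination_by r.length
decreasing_by
  have h1 : 0 < ret r := ret_pos hr
  have h2 : 0 < r.length := List.length_pos_iff.mpr hr
  simp only [List.length_drop]
  omega

@[simp] lemma dec_nil : dec [] = [] := by rw [dec]; simp

lemma ret_spec {r : List Bool} (hb : Bridge r) (hne : r ≠ []) :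
    paF r (ret r) = 0 ∧ ret r ≤ r.length ∧ ∀ k, 0 < k → k < ret r → 0 < paF r k := by
  have hex : ∃ n, 0 < n ∧ n ≤ r.length ∧ paF r n = 0 :=
    ⟨r.length, List.length_pos_iff.mpr hne, le_rfl, by rw [paF_length, hb.1]⟩
  rw [ret, dif_pos hex]
  obtain ⟨h1, h2, h3⟩ := Nat.find_spec hex
  refine ⟨h3, h2, fun k hk1 hk2 => ?_⟩
  have hk3 : k ≤ r.length := le_trans hk2.le h2
  have := Nat.find_min hex hk2
  have h4 : paF r k ≠ 0 := by tauto
  have := hb.2 k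
  omega


lemma bridge_decomp {r : List Bool} (hb : Bridge r) (hne : r ≠ []) :
    ∃ m s, r = (true :: m ++ [false]) ++ s ∧ Bridge m ∧ Bridge s ∧ dec r = m :: dec s := by
  obtain ⟨hret0, hretlen, hretpos⟩ := ret_spec hb hne
  obtain ⟨r', hr'⟩ := bridge_head hb hne
  have hrlen : r.length = r'.length + 1 := by rw [hr']; simp
  set t := ret r with htdef
  have ht1 : t ≠ 1 := by
    intro h1
    rw [h1, hr', paF_cons_succ, paF_zero, stp_true] at hret0
    omega
  have ht2 : 2 ≤ t := by have := ret_pos hne; omega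
  have hstep : paF r t = paF r (t - 1) + stp (r[t - 1]'(by omega)) := by
    have h := paF_succ' r (n := t - 1) (by omega)
    rwa [show t - 1 + 1 = t by omega] at h
  have hprev : 0 < paF r (t - 1) := hretpos _ (by omega) (by omega)
  have hlastfalse : r[t - 1]? = some false := by
    rw [List.getElem?_eq_getElem (by omega : t - 1 < r.length)]
    rcases Bool.eq_false_or_eq_true (r[t - 1]'(by omega)) with h | h
    · exfalso
      rw [h, stp_true] at hstep
      omega
    · rw [h]
  have hrs : r = r.take t ++ r.drop t := (List.take_append_drop _ r).symm
  have hLhead : r.take t = true :: r'.take (t - 1) := by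
    conv_lhs => rw [hr', show t = (t - 1) + 1 by omega]
    rw [List.take_succ_cons]
  have htaillen : (r'.take (t - 1)).length = t - 1 := by
    rw [List.length_take]
    omega
  have htailne : r'.take (t - 1) ≠ [] := by
    intro h
    rw [h] at htaillen
    simp at htaillen
    omega
  have hlast : (r'.take (t - 1)).getLast htailne = false := by
    have h1 : (r'.take (t - 1))[(r'.take (t - 1)).length - 1]? =
        some ((r'.take (t - 1)).getLast htailne) := by
      rw [List.getLast_eq_getElem, List.getElem?_eq_getElem]
    have h2 : (r'.take (t - 1))[(r'.take (t - 1)).length - 1]? = r'[t - 2]? := by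
      rw [htaillen, List.getElem?_take_of_lt (by omega : t - 1 - 1 < t - 1),
        show t - 1 - 1 = t - 2 from rfl]
    have h3 : r[t - 1]? = r'[t - 2]? := by
      rw [hr', show t - 1 = (t - 2) + 1 by omega, List.getElem?_cons_succ]
    rw [h2, ← h3, hlastfalse] at h1
    exact (Option.some_injective _ h1.symm)
  set m := (r'.take (t - 1)).dropLast with hm
  have htail2 : m ++ [false] = r'.take (t - 1) := by
    conv_rhs => rw [← List.dropLast_append_getLast htailne]
    rw [hlast]
  have hLm : r.take t = (true :: m) ++ [false] := by
    rw [hLhead, ← htail2]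
    rfl
  set s := r.drop t with hs
  have hreq : r = (true :: m ++ [false]) ++ s := by
    conv_lhs => rw [hrs]
    rw [hLm]
  have hdec : dec r = m :: dec s := by
    rw [dec, dif_neg hne]
    congr 1
    rw [← htdef, hLhead]
    simp only [List.drop_succ_cons, List.drop_zero]
    rfl
  have hhtL : ht (r.take t) = 0 := hret0
  have hhtm : ht m = 0 := by
    rw [hLm] at hhtL
    rw [ht_append, ht_cons, ht_singleton, stp_true, stp_false] at hhtL
    omega
  have hbm : Bridge m := by
    refine ⟨hhtm, fun k => ?_⟩
    rcases le_or_gt k m.length with hk | hk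
    · have hmlen : m.length = t - 2 := by
        have h5 := htaillen
        rw [← htail2] at h5
        simp at h5
        omega
      have hr2 : r = true :: (m ++ ([false] ++ s)) := by
        rw [hreq]; simp
      have hpk : paF r (k + 1) = 1 + paF m k := by
        conv_lhs => rw [hr2]
        rw [paF_cons_succ, stp_true, paF_append_left _ _ hk]
      have : 0 < paF r (k + 1) := hretpos _ (by omega) (by omega)
      omega
    · rw [paF_of_le _ (by omega), hhtm]
  have hbs : Bridge s := by
    constructor
    · have h6 := ht_append (r.take t) (r.drop t)
      rw [← hrs, hb.1, hhtL] at h6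
      rw [hs]
      omega
    · intro k
      rw [hs, paF_drop, hret0, sub_zero]
      exact hb.2 _
  exact ⟨m, s, hreq, hbm, hbs, hdec⟩

lemma first_aux {m p s q : List Bool} (hm : Bridge m) (hp : Bridge p)
    (hle : m.length ≤ p.length) (he : m ++ ([false] ++ s) = p ++ ([false] ++ q)) :
    m.length = p.length := by
  by_contra hne
  have hlt : m.length < p.length := by omega
  have h1 : paF (m ++ ([false] ++ s)) (m.length + 1) = -1 := by
    rw [paF_append_right, hm.1, show ([false] ++ s : List Bool) = false :: s from rfl,
      paF_cons_succ, paF_zero, stp_false]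
    ring
  have h2 : 0 ≤ paF (p ++ ([false] ++ q)) (m.length + 1) := by
    rw [paF_append_left _ _ (by omega)]
    exact hp.2 _
  rw [he] at h1
  omega

lemma first_uniq {m s p q : List Bool} (hm : Bridge m) (hp : Bridge p)
    (he : (true :: m ++ [false]) ++ s = (true :: p ++ [false]) ++ q) : m = p ∧ s = q := by
  have he' : m ++ ([false] ++ s) = p ++ ([false] ++ q) := by
    have : true :: (m ++ ([false] ++ s)) = true :: (p ++ ([false] ++ q)) := by
      simpa using he
    exact List.cons_injective.eq_iff.mp this
  have hlen : m.length = p.length := by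
    rcases le_or_gt m.length p.length with h | h
    · exact first_aux hm hp h he'
    · exact (first_aux hp hm h.le he'.symm).symm
  obtain ⟨h1, h2⟩ := List.append_inj he' hlen
  refine ⟨h1, ?_⟩
  simpa using h2

lemma dec_cons {p l₀ : List Bool} (hp : Bridge p) (hl : Bridge l₀) :
    dec ((true :: p ++ [false]) ++ l₀) = p :: dec l₀ := by
  have hbr : Bridge ((true :: p ++ [false]) ++ l₀) := bridge_append (bridge_wrap hp) hl
  have hne : (true :: p ++ [false]) ++ l₀ ≠ [] := by simp
  obtain ⟨m, s, hreq, hbm, hbs, hdec⟩ := bridge_decomp hbr hne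
  obtain ⟨hmp, hsq⟩ := first_uniq hbm hp hreq.symm
  rw [hdec, hmp, hsq]

lemma bridge_flatten {B : List (List Bool)} (h : ∀ m ∈ B, Bridge m) : Bridge B.flatten := by
  induction B with
  | nil => exact bridge_nil
  | cons b t ih =>
    rw [List.flatten_cons]
    exact bridge_append (h b (by simp)) (ih fun m hm => h m (by simp [hm]))

lemma lcW_flatten {B : List (List Bool)} (h : ∀ m ∈ B, Bridge m) (z : ℤ) :
    lcW B.flatten z = (B.map (fun m => lcW m z)).sum := by
  induction B with
  | nil => simp
  | cons b t ih =>
    rw [List.flatten_cons, lcW_append, (h b (by simp)).1, sub_zero, List.map_cons,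
      List.sum_cons, ih fun m hm => h m (by simp [hm])]

lemma dec_spec : ∀ (n : ℕ) (r : List Bool), r.length ≤ n → Bridge r →
    (∀ m ∈ dec r, Bridge m) ∧
    r = ((dec r).map (fun m => (true :: m ++ [false]))).flatten ∧
    (dec r).length = lcW r 0 ∧
    ∀ h : ℤ, 0 ≤ h → lcW ((dec r).flatten) h = lcW r (h + 1) := by
  intro n
  induction n with
  | zero =>
    intro r hlen _
    have : r = [] := List.eq_nil_of_length_eq_zero (by omega)
    subst this
    refine ⟨by simp, by simp, by simp, fun h _ => by simp⟩
  | succ n ih =>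
    intro r hlen hb
    by_cases hne : r = []
    · subst hne
      refine ⟨by simp, by simp, by simp, fun h _ => by simp⟩
    · obtain ⟨m, s, hreq, hbm, hbs, hdec⟩ := bridge_decomp hb hne
      have hrlen : r.length = m.length + s.length + 2 := by
        rw [hreq]; simp; omega
      obtain ⟨ihb, ihfl, ihlen, ihlc⟩ := ih s (by omega) hbs
      have hwht : ht (true :: m ++ [false]) = 0 := (bridge_wrap hbm).1
      refine ⟨?_, ?_, ?_, ?_⟩
      · intro m' hm'
        rw [hdec] at hm'
        rcases List.mem_cons.mp hm' with h | h
        · rwa [h]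
        · exact ihb m' h
      · rw [hdec, List.map_cons, List.flatten_cons, ← ihfl, ← hreq]
      · rw [hdec, List.length_cons, ihlen]
        conv_rhs => rw [hreq]
        rw [lcW_append, hwht, sub_zero, lcW_wrap_zero hbm]
        omega
      · intro h hh
        rw [hdec, List.flatten_cons, lcW_append, hbm.1, sub_zero, ihlc h hh]
        conv_rhs => rw [hreq]
        rw [lcW_append, hwht, sub_zero, lcW_wrap]
        have : ¬ (h + 1 = 0) := by omega
        rw [if_neg this]
        simp


lemma split_exists : ∀ (a : ℕ) (r : List Bool), Bridge r → a ≤ lcW r 0 →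
    ∃ p q, r = p ++ q ∧ Bridge p ∧ Bridge q ∧ lcW p 0 = a := by
  intro a
  induction a with
  | zero => exact fun r hb _ => ⟨[], r, rfl, bridge_nil, hb, by simp⟩
  | succ a ih =>
    intro r hb ha
    have hne : r ≠ [] := by
      intro h
      subst h
      rw [lcW_nil] at ha
      omega
    obtain ⟨m, s, hreq, hbm, hbs, -⟩ := bridge_decomp hb hne
    have hcount : lcW r 0 = 1 + lcW s 0 := by
      conv_lhs => rw [hreq]
      rw [lcW_append, (bridge_wrap hbm).1, sub_zero, lcW_wrap_zero hbm]
    obtain ⟨p', q, hsq, hbp', hbq, hc⟩ := ih s hbs (by omega)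
    refine ⟨(true :: m ++ [false]) ++ p', q, ?_, bridge_append (bridge_wrap hbm) hbp', hbq, ?_⟩
    · rw [hreq, hsq]
      simp [List.append_assoc]
    · rw [lcW_append, (bridge_wrap hbm).1, sub_zero, lcW_wrap_zero hbm, hc]
      omega

lemma sur : ∀ (c : List ℕ) (l' : List Bool), Bridge l' → lcW l' 0 = c.sum →
    ∃ l, Bridge l ∧ (dec l).map (fun m => lcW m 0) = c ∧ (dec l).flatten = l' := by
  intro c
  induction c with
  | nil =>
    intro l' hb hsum
    have hnil : l' = [] := by
      by_contra h
      have := lcW_zero_pos hb h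
      rw [List.sum_nil] at hsum
      omega
    subst hnil
    exact ⟨[], bridge_nil, by simp, by simp⟩
  | cons a c ih =>
    intro l' hb hsum
    rw [List.sum_cons] at hsum
    obtain ⟨p, q, hpq, hbp, hbq, hcp⟩ := split_exists a l' hb (by omega)
    have hq : lcW q 0 = c.sum := by
      have h := lcW_append p q 0
      rw [← hpq, hbp.1, sub_zero, hcp] at h
      omega
    obtain ⟨l₀, hbl₀, hmap, hfl⟩ := ih q hbq hq
    refine ⟨(true :: p ++ [false]) ++ l₀, bridge_append (bridge_wrap hbp) hbl₀, ?_, ?_⟩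
    · rw [dec_cons hbp hbl₀, List.map_cons, hmap, hcp]
    · rw [dec_cons hbp hbl₀, List.flatten_cons, hfl, hpq]

lemma prefix_bridge_eq {m p : List Bool} (hm : Bridge m) (hp : Bridge p)
    (hpre : m <+: p) (hc : lcW m 0 = lcW p 0) : m = p := by
  obtain ⟨d, rfl⟩ := hpre
  have hbd : Bridge d := by
    constructor
    · have h := ht_append m d
      rw [hp.1, hm.1] at h
      omega
    · intro k
      have h := hp.2 (m.length + k)
      rwa [paF_append_right, hm.1, zero_add] at h
  rw [lcW_append, hm.1, sub_zero] at hc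
  have hd : d = [] := by
    by_contra h
    have := lcW_zero_pos hbd h
    omega
  rw [hd, List.append_nil]

lemma dec_unique : ∀ (B B' : List (List Bool)), (∀ m ∈ B, Bridge m) → (∀ m ∈ B', Bridge m) →
    B.map (fun m => lcW m 0) = B'.map (fun m => lcW m 0) → B.flatten = B'.flatten → B = B' := by
  intro B
  induction B with
  | nil =>
    intro B' _ _ hmap _
    exact (List.map_eq_nil_iff.mp hmap.symm).symm
  | cons m B ih =>
    intro B' hB hB' hmap hfl
    cases B' with
    | nil => simp at hmap
    | cons m' B'' =>
      rw [List.map_cons, List.map_cons] at hmap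
      obtain ⟨h1, h2⟩ := List.cons_eq_cons.mp hmap
      rw [List.flatten_cons, List.flatten_cons] at hfl
      have hbm := hB m (by simp)
      have hbm' := hB' m' (by simp)
      have hmm' : m = m' := by
        have hpre : m <+: m ++ B.flatten := ⟨_, rfl⟩
        have hpre' : m' <+: m ++ B.flatten := by
          rw [hfl]
          exact ⟨_, rfl⟩
        rcases List.prefix_or_prefix_of_prefix hpre hpre' with h | h
        · exact prefix_bridge_eq hbm hbm' h h1
        · exact (prefix_bridge_eq hbm' hbm h h1.symm).symm
      subst hmm'
      have hfl' : B.flatten = B''.flatten := List.append_cancel_left hfl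
      rw [ih B'' (fun x hx => hB x (by simp [hx])) (fun x hx => hB' x (by simp [hx])) h2 hfl']


abbrev CSet (k s : ℕ) : Type := {c : List ℕ // c.length = k ∧ c.sum = s}

lemma list_getD_le_sum : ∀ (l : List ℕ) (i : ℕ), l.getD i 0 ≤ l.sum := by
  intro l
  induction l with
  | nil => intro i; simp
  | cons a t ih =>
    intro i
    cases i with
    | zero => simp
    | succ i =>
      rw [List.getD_cons_succ, List.sum_cons]
      exact le_add_left (ih i)

instance cset_finite (k s : ℕ) : Finite (CSet k s) := by
  apply Finite.of_injective (fun c : CSet k s => fun i : Fin k =>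
    (⟨c.1.getD i 0, by have := list_getD_le_sum c.1 i; have h2 := c.2.2; omega⟩ : Fin (s + 1)))
  rintro ⟨c, hcl, hcs⟩ ⟨c', hcl', hcs'⟩ h
  apply Subtype.ext
  show c = c'
  apply List.ext_getElem (by omega)
  intro i hi hi'
  have h2 := congrFun h ⟨i, by omega⟩
  simp only [Fin.mk.injEq] at h2
  rwa [List.getD_eq_getElem c 0 hi, List.getD_eq_getElem c' 0 hi'] at h2

lemma nat_card_sigma {ι : Type} [Fintype ι] (f : ι → Type) [∀ i, Finite (f i)] :
    Nat.card (Σ i, f i) = ∑ i, Nat.card (f i) := by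
  letI := fun i => Fintype.ofFinite (f i)
  rw [Nat.card_eq_fintype_card, Fintype.card_sigma]
  exact Finset.sum_congr rfl fun i _ => (Nat.card_eq_fintype_card).symm

lemma sum_multichoose (k : ℕ) : ∀ s : ℕ,
    ∑ a ∈ Finset.range (s + 1), Nat.multichoose k (s - a) = Nat.multichoose (k + 1) s := by
  intro s
  induction s with
  | zero => simp
  | succ s ih =>
    rw [Finset.sum_range_succ']
    have h1 : ∀ a ∈ Finset.range (s + 1), Nat.multichoose k (s + 1 - (a + 1)) =
        Nat.multichoose k (s - a) := fun a _ => by congr 1; omega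
    rw [Finset.sum_congr rfl h1, ih, Nat.sub_zero, Nat.multichoose_succ_succ]
    omega

lemma card_CSet : ∀ k s : ℕ, Nat.card (CSet k s) = Nat.multichoose k s := by
  intro k
  induction k with
  | zero =>
    intro s
    cases s with
    | zero =>
      rw [Nat.multichoose_zero_right]
      rw [Nat.card_eq_one_iff_unique]
      constructor
      · constructor
        rintro ⟨c, hcl, hcs⟩ ⟨c', hcl', hcs'⟩
        apply Subtype.ext
        show c = c'
        rw [List.length_eq_zero_iff.mp hcl, List.length_eq_zero_iff.mp hcl']
      · exact ⟨⟨[], rfl, rfl⟩⟩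
    | succ s =>
      rw [Nat.multichoose_zero_succ, Nat.card_eq_zero]
      left
      rw [isEmpty_iff]
      rintro ⟨c, hcl, hcs⟩
      rw [List.length_eq_zero_iff.mp hcl] at hcs
      simp at hcs
  | succ k ih =>
    intro s
    have hbij : Function.Bijective (fun x : Σ a : Fin (s + 1), CSet k (s - a.1) =>
        (⟨x.1.1 :: x.2.1, by simp [x.2.2.1], by
          have h1 := x.2.2.2
          have h2 := x.1.2
          simp only [List.sum_cons]
          omega⟩ : CSet (k + 1) s)) := by
      constructor
      · rintro ⟨⟨a, ha⟩, ⟨c, hc⟩⟩ ⟨⟨a', ha'⟩, ⟨c', hc'⟩⟩ h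
        simp only [Subtype.mk.injEq, List.cons.injEq] at h
        obtain ⟨h1, h2⟩ := h
        subst h1
        exact Sigma.ext rfl (heq_of_eq (Subtype.ext h2))
      · rintro ⟨c, hcl, hcs⟩
        cases c with
        | nil => simp at hcl
        | cons a c' =>
          have ha : a ≤ s := by
            rw [List.sum_cons] at hcs
            omega
          refine ⟨⟨⟨a, by omega⟩, ⟨c', by simpa using hcl, ?_⟩⟩, rfl⟩
          show c'.sum = s - a
          rw [List.sum_cons] at hcs
          omega
    rw [← Nat.card_eq_of_bijective _ hbij, nat_card_sigma]
    have : ∀ a : Fin (s + 1), Nat.card (CSet k (s - a.1)) = Nat.multichoose k (s - a.1) :=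
      fun a => ih _
    rw [Finset.sum_congr rfl fun a _ => this a, Fin.sum_univ_eq_sum_range
      (fun a => Nat.multichoose k (s - a)) (s + 1), sum_multichoose]


abbrev WSet (M : ℕ → ℕ) : Type := {l : List Bool // Bridge l ∧ ∀ h : ℕ, lcW l (h : ℤ) = M h}

lemma word_count : ∀ (H : ℕ) (M : ℕ → ℕ), (∀ h, h < H → 0 < M h) → (∀ h, H ≤ h → M h = 0) →
    Nat.card (WSet M) = ∏ h ∈ Finset.range H, Nat.choose (M (h + 1) + M h - 1) (M h - 1) := by
  intro H
  induction H with
  | zero =>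
    intro M hpos hzero
    have hM : ∀ h, M h = 0 := fun h => hzero h (Nat.zero_le h)
    rw [Finset.range_zero, Finset.prod_empty, Nat.card_eq_one_iff_unique]
    constructor
    · constructor
      rintro ⟨l, hbl, hcl⟩ ⟨l', hbl', hcl'⟩
      have hnil : ∀ (w : List Bool), Bridge w → (∀ h : ℕ, lcW w (h : ℤ) = M h) → w = [] := by
        intro w hbw hcw
        by_contra hwne
        have := lcW_zero_pos hbw hwne
        have h2 := hcw 0
        rw [hM 0] at h2
        norm_num at h2
        omega
      apply Subtype.ext
      show l = l'
      rw [hnil l hbl hcl, hnil l' hbl' hcl']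
    · exact ⟨⟨[], bridge_nil, fun h => by simp [hM]⟩⟩
  | succ H ih =>
    intro M hpos hzero
    set F : WSet M → CSet (M 0) (M 1) × WSet (fun h => M (h + 1)) := fun x =>
      (⟨(dec x.1).map (fun m => lcW m 0), by
          have spec := dec_spec x.1.length x.1 le_rfl x.2.1
          constructor
          · rw [List.length_map, spec.2.2.1]
            simpa using x.2.2 0
          · rw [← lcW_flatten spec.1 0, spec.2.2.2 0 le_rfl]
            simpa using x.2.2 1⟩,
       ⟨(dec x.1).flatten, by
          have spec := dec_spec x.1.length x.1 le_rfl x.2.1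
          refine ⟨bridge_flatten spec.1, fun h => ?_⟩
          rw [spec.2.2.2 h (Int.natCast_nonneg h)]
          have h7 := x.2.2 (h + 1)
          rwa [show (((h + 1 : ℕ)) : ℤ) = (h : ℤ) + 1 by push_cast; ring] at h7⟩) with hF
    have hbij : Function.Bijective F := by
      constructor
      · intro x y h
        have specx := dec_spec x.1.length x.1 le_rfl x.2.1
        have specy := dec_spec y.1.length y.1 le_rfl y.2.1
        have h1 : (dec x.1).map (fun m => lcW m 0) = (dec y.1).map (fun m => lcW m 0) :=
          congrArg (fun p => p.1.1) h
        have h2 : (dec x.1).flatten = (dec y.1).flatten := congrArg (fun p => p.2.1) h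
        have h3 := dec_unique _ _ specx.1 specy.1 h1 h2
        apply Subtype.ext
        rw [specx.2.1, h3]
        exact specy.2.1.symm
      · rintro ⟨⟨c, hclen, hcsum⟩, ⟨l', hbl', hcl'⟩⟩
        have hl'c : lcW l' 0 = c.sum := by
          rw [hcsum]
          simpa using hcl' 0
        obtain ⟨l, hbl, hmap, hfl⟩ := sur c l' hbl' hl'c
        have spec := dec_spec l.length l le_rfl hbl
        have hcounts : ∀ h : ℕ, lcW l (h : ℤ) = M h := by
          intro h
          cases h with
          | zero =>
            have h4 : (dec l).length = lcW l 0 := spec.2.2.1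
            have h5 : (dec l).length = c.length := by
              rw [← hmap] at hclen ⊢
              rw [List.length_map]
            norm_num
            rw [← h4, h5, hclen]
          | succ h =>
            have h6 := spec.2.2.2 h (Int.natCast_nonneg h)
            rw [hfl] at h6
            rw [show (((h + 1 : ℕ)) : ℤ) = (h : ℤ) + 1 by push_cast; ring, ← h6]
            exact hcl' h
        refine ⟨⟨l, hbl, hcounts⟩, ?_⟩
        exact Prod.ext_iff.mpr ⟨Subtype.ext hmap, Subtype.ext hfl⟩
    rw [Nat.card_eq_of_bijective F hbij, Nat.card_prod, card_CSet,
      ih (fun h => M (h + 1)) (fun h hh => hpos (h + 1) (by omega))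
        (fun h hh => hzero (h + 1) (by omega)), Finset.prod_range_succ', mul_comm]
    congr 1
    · show (M 0).multichoose (M 1) = (M (0 + 1) + M 0 - 1).choose (M 0 - 1)
      rw [show M (0 + 1) = M 1 from rfl]
      rw [Nat.multichoose_eq]
      have h8 : M 0 + M 1 - 1 = M 1 + M 0 - 1 := by omega
      have h9 : M 1 ≤ M 1 + M 0 - 1 := by
        have := hpos 0 (by omega)
        omega
      rw [h8, ← Nat.choose_symm h9]
      congr 1
      have := hpos 0 (by omega)
      omega


lemma bridge_pos {l : List Bool} (hb : Bridge l) (hone : lcW l 0 = 1) :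
    ∀ n, 0 < n → n < l.length → 0 < paF l n := by
  intro n hn1 hn2
  by_contra hle
  have h0 : paF l n = 0 := le_antisymm (by omega) (hb.2 n)
  have hbt : Bridge (l.take n) := by
    refine ⟨h0, fun k => ?_⟩
    rw [paF_take]
    exact hb.2 _
  have hbd : Bridge (l.drop n) := by
    constructor
    · have h1 := ht_append (l.take n) (l.drop n)
      rw [List.take_append_drop] at h1
      have h2 : ht (l.take n) = paF l n := rfl
      rw [hb.1, h2, h0] at h1
      omega
    · intro k
      rw [paF_drop, h0, sub_zero]
      exact hb.2 _
  have htne : l.take n ≠ [] := by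
    intro h
    have := congrArg List.length h
    rw [List.length_take] at this
    simp only [List.length_nil] at this
    omega
  have hdne : l.drop n ≠ [] := by
    intro h
    have := congrArg List.length h
    rw [List.length_drop] at this
    simp only [List.length_nil] at this
    omega
  have hsplit : lcW l 0 = lcW (l.take n) 0 + lcW (l.drop n) 0 := by
    conv_lhs => rw [← List.take_append_drop n l]
    rw [lcW_append, hbt.1, sub_zero]
  have h3 := lcW_zero_pos hbt htne
  have h4 := lcW_zero_pos hbd hdne
  omega

lemma bridge_length {l : List Bool} (hb : Bridge l) (H : ℕ)
    (hz : ∀ h : ℕ, H ≤ h → lcW l (h : ℤ) = 0) :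
    l.length = 2 * ∑ h ∈ Finset.range H, lcW l (h : ℤ) := by
  classical
  have hstep : ∀ n, n < l.length → paF l (n + 1) - paF l n = 1 ∨ paF l (n + 1) - paF l n = -1 := by
    intro n hn
    rcases Bool.eq_false_or_eq_true (l[n]'hn) with h | h
    · left
      rw [paF_succ' l hn, h, stp_true]
      ring
    · right
      rw [paF_succ' l hn, h, stp_false]
      ring
  have htele : ∑ n ∈ Finset.range l.length, (paF l (n + 1) - paF l n) = 0 := by
    rw [Finset.sum_range_sub (fun n => paF l n), paF_length, hb.1, paF_zero, sub_zero]
  have hsplit := Finset.sum_filter_add_sum_filter_not (Finset.range l.length)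
    (fun n => paF l (n + 1) = paF l n + 1) (fun n => paF l (n + 1) - paF l n)
  have hup : ∑ n ∈ (Finset.range l.length).filter (fun n => paF l (n + 1) = paF l n + 1),
      (paF l (n + 1) - paF l n) =
      ((Finset.range l.length).filter (fun n => paF l (n + 1) = paF l n + 1)).card := by
    have hone : ∀ n ∈ (Finset.range l.length).filter (fun n => paF l (n + 1) = paF l n + 1),
        paF l (n + 1) - paF l n = 1 := by
      intro n hn
      rw [Finset.mem_filter] at hn
      omega
    rw [Finset.sum_congr rfl hone, Finset.sum_const, nsmul_eq_mul, mul_one]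
  have hdown : ∑ n ∈ (Finset.range l.length).filter (fun n => ¬ paF l (n + 1) = paF l n + 1),
      (paF l (n + 1) - paF l n) =
      -(((Finset.range l.length).filter (fun n => ¬ paF l (n + 1) = paF l n + 1)).card : ℤ) := by
    have hmone : ∀ n ∈ (Finset.range l.length).filter
        (fun n => ¬ paF l (n + 1) = paF l n + 1), paF l (n + 1) - paF l n = -1 := by
      intro n hn
      rw [Finset.mem_filter, Finset.mem_range] at hn
      have := hstep n hn.1
      omega
    rw [Finset.sum_congr rfl hmone, Finset.sum_const, nsmul_eq_mul, mul_neg_one]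
  have hcard := Finset.card_filter_add_card_filter_not (s := Finset.range l.length)
    (p := fun n => paF l (n + 1) = paF l n + 1)
  rw [Finset.card_range] at hcard
  -- fiberwise count of up-steps
  have hmem : ∀ n ∈ (Finset.range l.length).filter (fun n => paF l (n + 1) = paF l n + 1),
      (paF l n).toNat ∈ Finset.range H := by
    intro n hn
    rw [Finset.mem_range]
    by_contra hge
    have h0 : lcW l (((paF l n).toNat : ℕ) : ℤ) = 0 := hz _ (by omega)
    rw [lcW, Finset.card_eq_zero] at h0
    have hnn := hb.2 n
    have hmem2 : n ∈ (Finset.range l.length).filter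
        (fun m => paF l m = (((paF l n).toNat : ℕ) : ℤ) ∧ paF l (m + 1) = paF l m + 1) := by
      rw [Finset.mem_filter]
      rw [Finset.mem_filter] at hn
      exact ⟨hn.1, by omega, hn.2⟩
    rw [h0] at hmem2
    exact absurd hmem2 (Finset.notMem_empty n)
  have hfib := Finset.card_eq_sum_card_fiberwise hmem
  have hfibeq : ∀ h ∈ Finset.range H,
      (((Finset.range l.length).filter (fun n => paF l (n + 1) = paF l n + 1)).filter
        (fun n => (paF l n).toNat = h)).card = lcW l (h : ℤ) := by
    intro h _
    rw [lcW]
    congr 1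
    rw [Finset.filter_filter]
    apply Finset.filter_congr
    intro n hn
    have hnn := hb.2 n
    constructor
    · rintro ⟨h1, h2⟩
      exact ⟨by omega, h1⟩
    · rintro ⟨h1, h2⟩
      exact ⟨h2, by omega⟩
  rw [Finset.sum_congr rfl hfibeq] at hfib
  have hud : ((Finset.range l.length).filter (fun n => paF l (n + 1) = paF l n + 1)).card =
      ((Finset.range l.length).filter (fun n => ¬ paF l (n + 1) = paF l n + 1)).card := by
    rw [hup, hdown] at hsplit
    rw [htele] at hsplit
    omega
  omega


lemma stp_inj {b b' : Bool} (h : stp b = stp b') : b = b' := by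
  cases b <;> cases b' <;> simp [stp] at h ⊢

def toWord (x : ℕ → ℤ) (θ : ℕ) : List Bool :=
  (List.range θ).map (fun n => decide (x (n + 1) = x n + 1))

@[simp] lemma toWord_length (x : ℕ → ℤ) (θ : ℕ) : (toWord x θ).length = θ := by
  simp [toWord]

lemma toWord_get (x : ℕ → ℤ) (θ : ℕ) (n : ℕ) (hn : n < θ) :
    (toWord x θ)[n]'(by simp [toWord]; omega) = decide (x (n + 1) = x n + 1) := by
  simp [toWord]

lemma paF_toWord {x : ℕ → ℤ} {θ : ℕ}
    (hstep : ∀ n, n < θ → x (n + 1) - x n = 1 ∨ x (n + 1) - x n = -1) (h0 : x 0 = 0) :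
    ∀ n, n ≤ θ → paF (toWord x θ) n = x n := by
  intro n
  induction n with
  | zero => intro _; rw [paF_zero, h0]
  | succ n ih =>
    intro hn
    have hn' : n < θ := by omega
    have hlt : n < (toWord x θ).length := by rw [toWord_length]; omega
    rw [paF_succ' _ hlt, ih (by omega)]
    have hg := toWord_get x θ n hn'
    rcases hstep n hn' with h | h
    · rw [hg, decide_eq_true (show x (n + 1) = x n + 1 by omega), stp_true]
      omega
    · rw [hg, decide_eq_false (show ¬ x (n + 1) = x n + 1 by omega), stp_false]
      omega

end ExcAux

open ExcAux in
theorem card_excursions_with_level_numbers (N : ℕ → ℕ) (H : ℕ)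
    (h0 : N 0 = 1) (hH : 1 ≤ H) (hpos : ∀ h, h < H → 0 < N h)
    (hzero : ∀ h, H ≤ h → N h = 0) :
    Nat.card {x : ℕ → ℤ //
        IsPosExc x (2 * ∑ h ∈ Finset.range H, N h) ∧
        (∀ k, 2 * ∑ h ∈ Finset.range H, N h ≤ k → x k = 0) ∧
        ∀ h : ℕ, levelCount x (2 * ∑ h ∈ Finset.range H, N h) (h : ℤ) = N h} =
      ∏ h ∈ Finset.Icc 1 (H - 2), Nat.choose (N (h + 1) + N h - 1) (N h - 1) := by
  classical
  set θ := 2 * ∑ h ∈ Finset.range H, N h with hθ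
  have hlenW : ∀ (l : List Bool), Bridge l → (∀ h : ℕ, lcW l (h : ℤ) = N h) →
      l.length = θ := by
    intro l hb hc
    rw [bridge_length hb H (fun h hh => by rw [hc h, hzero h hh]), hθ]
    congr 1
    exact Finset.sum_congr rfl fun h _ => hc h
  set G : WSet N → {x : ℕ → ℤ // IsPosExc x θ ∧ (∀ k, θ ≤ k → x k = 0) ∧
      ∀ h : ℕ, levelCount x θ (h : ℤ) = N h} := fun l => by
    refine ⟨fun n => paF l.1 n, ⟨paF_zero _, ?_, ?_, ?_⟩, ?_, ?_⟩
    · -- x θ = 0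
      show paF l.1 θ = 0
      rw [← hlenW l.1 l.2.1 l.2.2, paF_length, l.2.1.1]
    · -- interior positivity
      intro n hn1 hn2
      have hone : lcW l.1 0 = 1 := by
        have h1 := l.2.2 0
        rw [h0] at h1
        simpa using h1
      exact bridge_pos l.2.1 hone n hn1 (by rw [hlenW l.1 l.2.1 l.2.2]; omega)
    · -- steps
      intro n hn
      have hn' : n < l.1.length := by rw [hlenW l.1 l.2.1 l.2.2]; omega
      rcases Bool.eq_false_or_eq_true (l.1[n]'hn') with hb | hb
      · left
        show paF l.1 (n + 1) - paF l.1 n = 1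
        rw [paF_succ' _ hn', hb, stp_true]
        ring
      · right
        show paF l.1 (n + 1) - paF l.1 n = -1
        rw [paF_succ' _ hn', hb, stp_false]
        ring
    · -- tail zero
      intro k hk
      show paF l.1 k = 0
      rw [paF_of_le _ (by rw [hlenW l.1 l.2.1 l.2.2]; omega), l.2.1.1]
    · -- level counts
      intro h
      have heq : levelCount (fun n => paF l.1 n) θ (h : ℤ) = lcW l.1 (h : ℤ) := by
        simp only [levelCount, lcW, hlenW l.1 l.2.1 l.2.2]
      rw [heq]
      exact l.2.2 h
  have hGbij : Function.Bijective G := by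
    constructor
    · intro l l' h
      have hfun : (fun n => paF l.1 n) = (fun n => paF l'.1 n) := congrArg Subtype.val h
      have hL : l.1.length = θ := hlenW l.1 l.2.1 l.2.2
      have hL' : l'.1.length = θ := hlenW l'.1 l'.2.1 l'.2.2
      apply Subtype.ext
      apply List.ext_getElem (by omega)
      intro i h1 h2
      apply stp_inj
      have e1 := paF_succ' l.1 h1
      have e2 := paF_succ' l'.1 h2
      have e3 : paF l.1 i = paF l'.1 i := congrFun hfun i
      have e4 : paF l.1 (i + 1) = paF l'.1 (i + 1) := congrFun hfun (i + 1)
      omega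
    · rintro ⟨x, hx, htail, hcnt⟩
      have hpa : ∀ n, n ≤ θ → paF (toWord x θ) n = x n := paF_toWord hx.2.2.2 hx.1
      have hbw : Bridge (toWord x θ) := by
        constructor
        · rw [← paF_length, toWord_length, hpa θ le_rfl, hx.2.1]
        · intro n
          rcases le_or_gt n θ with hn | hn
          · rw [hpa n hn]
            rcases Nat.eq_zero_or_pos n with h | h
            · rw [h, hx.1]
            · rcases eq_or_lt_of_le hn with h' | h'
              · rw [h', hx.2.1]
              · exact (hx.2.2.1 n h h').le
          · rw [paF_of_le _ (by rw [toWord_length]; omega), ← paF_length,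
              toWord_length, hpa θ le_rfl, hx.2.1]
      have hcw : ∀ h : ℕ, lcW (toWord x θ) (h : ℤ) = N h := by
        intro h
        rw [← hcnt h, lcW, toWord_length, levelCount]
        congr 1
        apply Finset.filter_congr
        intro n hn
        rw [Finset.mem_range] at hn
        rw [hpa n (by omega), hpa (n + 1) (by omega)]
      refine ⟨⟨toWord x θ, hbw, hcw⟩, ?_⟩
      apply Subtype.ext
      show (fun n => paF (toWord x θ) n) = x
      funext n
      rcases le_or_gt n θ with hn | hn
      · exact hpa n hn
      · rw [paF_of_le _ (by rw [toWord_length]; omega), ← paF_length, toWord_length,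
          hpa θ le_rfl, hx.2.1, htail n (by omega)]
  rw [← Nat.card_eq_of_bijective G hGbij,
    word_count H N hpos hzero]
  refine (Finset.prod_subset ?_ ?_).symm
  · intro h hm
    rw [Finset.mem_Icc] at hm
    rw [Finset.mem_range]
    omega
  · intro h hm hnm
    rw [Finset.mem_range] at hm
    rw [Finset.mem_Icc] at hnm
    rcases Nat.eq_zero_or_pos h with h1 | h1
    · subst h1
      rw [h0]
      simp
    · have h2 : h = H - 1 := by omega
      rw [show h + 1 = H by omega, hzero H le_rfl, zero_add, Nat.choose_self]
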